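/- (Addition theorem for q-Genocchi polynomials.) For all x, y ∈ ℂ and every integer n ≥ 0: G_{n,q}(x,y) = Σ_{k=0}^{n} [n choose k]_q g_{k,q} (x ⊕_q y)^{n−k}, and also G_{n,q}(x,y) = Σ_{k=0}^{n} [n choose k]_q ((−1;q)_{n−k}/2^{n−k}) G_{k,q}(x) y^{n−k}. -/

import Mathlib

open Finset PowerSeries

/-- The `q`-number `[n]_q = (1 - q^n)/(1 - q)`. -/
noncomputable def qNum (q : ℂ) (n : ℕ) : ℂ := (1 - q ^ n) / (1 - q)

/-- The `q`-factorial `[n]_q!`. -/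
noncomputable def qFact (q : ℂ) : ℕ → ℂ
  | 0 => 1
  | n + 1 => qNum q (n + 1) * qFact q n

/-- The `q`-shifted factorial `(a; q)_n = ∏_{j=0}^{n-1} (1 - q^j a)`. -/
noncomputable def qShift (a q : ℂ) (n : ℕ) : ℂ := ∏ j ∈ Finset.range n, (1 - q ^ j * a)

/-- The Gaussian binomial coefficient `[n choose k]_q = (q;q)_n / ((q;q)_{n-k} (q;q)_k)`. -/
noncomputable def qBinom (q : ℂ) (n k : ℕ) : ℂ :=
  qShift q q n / (qShift q q (n - k) * qShift q q k)

/-- The formal power series (in `t`) `𝓔_q(tx) = Σ_{n≥0} (-1;q)_n (x)^n t^n / (2^n [n]_q!)`. -/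
noncomputable def qExp (q x : ℂ) : PowerSeries ℂ :=
  PowerSeries.mk fun n => qShift (-1) q n * x ^ n / (2 ^ n * qFact q n)

/-- The generating series `Σ_{n≥0} a_n t^n / [n]_q!` of a sequence `a`. -/
noncomputable def qGen (q : ℂ) (a : ℕ → ℂ) : PowerSeries ℂ :=
  PowerSeries.mk fun n => a n / qFact q n

/-- The `q`-addition `(x ⊕_q y)^n`. -/
noncomputable def qAdd (q x y : ℂ) (n : ℕ) : ℂ :=
  ∑ k ∈ Finset.range (n + 1),
    qBinom q n k * (qShift (-1) q k * qShift (-1) q (n - k) / 2 ^ n) * x ^ k * y ^ (n - k)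

-- auxiliary lemmas

lemma qpow_ne_one {q : ℂ} (hq1 : ‖q‖ < 1) {n : ℕ} (hn : n ≠ 0) : q ^ n ≠ 1 := by
  intro h
  have h1 : ‖q ^ n‖ = 1 := by rw [h]; simp
  rw [norm_pow] at h1
  have h2 : ‖q‖ ^ n < 1 := pow_lt_one₀ (norm_nonneg q) hq1 hn
  linarith

lemma qFact_ne_zero {q : ℂ} (hq1 : ‖q‖ < 1) (n : ℕ) : qFact q n ≠ 0 := by
  induction n with
  | zero => simp [qFact]
  | succ n ih =>
    have h1 : (1 : ℂ) - q ^ (n + 1) ≠ 0 := sub_ne_zero.mpr (Ne.symm (qpow_ne_one hq1 (by omega)))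
    have h2 : (1 : ℂ) - q ≠ 0 := by
      have := qpow_ne_one hq1 (n := 1) one_ne_zero
      simpa using sub_ne_zero.mpr (Ne.symm (by simpa using this))
    exact mul_ne_zero (div_ne_zero h1 h2) ih

lemma one_sub_q_ne {q : ℂ} (hq1 : ‖q‖ < 1) : (1 : ℂ) - q ≠ 0 := by
  have := qpow_ne_one hq1 (n := 1) one_ne_zero
  simpa using sub_ne_zero.mpr (Ne.symm (by simpa using this))

lemma qShift_qq {q : ℂ} (n : ℕ) : qShift q q n = (1 - q) ^ n * qFact q n := by
  induction n with
  | zero => simp [qShift, qFact]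
  | succ n ih =>
    rw [qShift, Finset.prod_range_succ, ← qShift, ih]
    rw [qFact, qNum]
    have : q ^ n * q = q ^ (n + 1) := by ring
    rw [this]
    by_cases h : (1 : ℂ) - q = 0
    · have hq : q = 1 := by linear_combination -h
      subst hq; simp
    · field_simp
      ring

lemma qBinom_eq {q : ℂ} (hq1 : ‖q‖ < 1) {n k : ℕ} (hk : k ≤ n) :
    qBinom q n k = qFact q n / (qFact q k * qFact q (n - k)) := by
  have h1q := one_sub_q_ne hq1
  rw [qBinom, qShift_qq, qShift_qq, qShift_qq]
  have hpow : (1 - q) ^ (n - k) * (1 - q) ^ k = (1 - q) ^ n := by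
    rw [← pow_add]; congr 1; omega
  rw [show (1 - q) ^ (n - k) * qFact q (n - k) * ((1 - q) ^ k * qFact q k)
      = (1 - q) ^ n * (qFact q k * qFact q (n - k)) by rw [← hpow]; ring]
  exact mul_div_mul_left _ _ (pow_ne_zero n h1q)

lemma qExp_zero {q : ℂ} : qExp q 0 = 1 := by
  ext n
  cases n with
  | zero => simp [qExp, qShift, qFact]
  | succ n => simp [qExp, coeff_one]

lemma E_ne_zero {q : ℂ} : qExp q 1 + 1 ≠ 0 := by
  intro h
  have : PowerSeries.constantCoeff (qExp q 1 + 1) = 0 := by rw [h]; simp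
  rw [map_add, map_one] at this
  have h0 : PowerSeries.constantCoeff (qExp q 1) = 1 := by
    simp [qExp, ← PowerSeries.coeff_zero_eq_constantCoeff, qShift, qFact]
  rw [h0] at this
  norm_num at this

lemma coeff_gen_mul {q : ℂ} (a : ℕ → ℂ) (Φ : PowerSeries ℂ) (n : ℕ) :
    PowerSeries.coeff n (qGen q a * Φ) =
      ∑ k ∈ Finset.range (n + 1), (a k / qFact q k) * PowerSeries.coeff (n - k) Φ := by
  rw [PowerSeries.coeff_mul, Finset.Nat.sum_antidiagonal_eq_sum_range_succ_mk]
  simp [qGen]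

/-- Addition theorem for the `q`-Genocchi polynomials `G_{n,q}(x,y)`, defined by
`(2t/(𝓔_q(t)+1)) 𝓔_q(tx) 𝓔_q(ty) = Σ_{n≥0} G_{n,q}(x,y) t^n/[n]_q!`, in terms of the
`q`-Genocchi numbers `g_{n,q}` defined by `2t/(𝓔_q(t)+1) = Σ_{n≥0} g_{n,q} t^n/[n]_q!`. -/
theorem qGenocchi_addition (q : ℂ) (hq0 : 0 < ‖q‖) (hq1 : ‖q‖ < 1)
    (g : ℕ → ℂ) (hg : qGen q g * (qExp q 1 + 1) = 2 * PowerSeries.X)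
    (G : ℂ → ℂ → ℕ → ℂ)
    (hG : ∀ x y : ℂ, qGen q (G x y) * (qExp q 1 + 1) = 2 * PowerSeries.X * qExp q x * qExp q y)
    (x y : ℂ) (n : ℕ) :
    G x y n = ∑ k ∈ Finset.range (n + 1), qBinom q n k * g k * qAdd q x y (n - k) ∧
    G x y n = ∑ k ∈ Finset.range (n + 1),
      qBinom q n k * (qShift (-1) q (n - k) / 2 ^ (n - k)) * G x 0 k * y ^ (n - k) := by
  have hF := qFact_ne_zero hq1
  -- main power series identities
  have key : ∀ a b : ℂ, qGen q (G a b) = qGen q g * (qExp q a * qExp q b) := by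
    intro a b
    apply mul_right_cancel₀ (E_ne_zero (q := q))
    rw [hG a b, show qGen q g * (qExp q a * qExp q b) * (qExp q 1 + 1)
        = qGen q g * (qExp q 1 + 1) * qExp q a * qExp q b by ring, hg]
  have key0 : qGen q (G x 0) = qGen q g * qExp q x := by
    rw [key x 0, qExp_zero, mul_one]
  have keyy : qGen q (G x y) = qGen q (G x 0) * qExp q y := by
    rw [key x y, key0]; ring
  -- coefficient of qExp q x * qExp q y
  have hEE : ∀ m : ℕ, PowerSeries.coeff m (qExp q x * qExp q y) = qAdd q x y m / qFact q m := by
    intro m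
    rw [PowerSeries.coeff_mul, Finset.Nat.sum_antidiagonal_eq_sum_range_succ_mk, qAdd,
      Finset.sum_div]
    apply Finset.sum_congr rfl
    intro j hj
    have hjm : j ≤ m := by simp at hj; omega
    simp only [qExp, coeff_mk]
    rw [qBinom_eq hq1 hjm]
    have h2m : (2 : ℂ) ^ m = 2 ^ j * 2 ^ (m - j) := by rw [← pow_add]; congr 1; omega
    rw [h2m]
    field_simp [qFact_ne_zero hq1]
  constructor
  · -- first identity
    have h1 : PowerSeries.coeff n (qGen q (G x y)) =
        ∑ k ∈ Finset.range (n + 1), (g k / qFact q k) * (qAdd q x y (n - k) / qFact q (n - k)) := by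
      rw [key x y, coeff_gen_mul]
      exact Finset.sum_congr rfl fun k _ => by rw [hEE]
    simp only [qGen, coeff_mk] at h1
    rw [div_eq_iff (hF n)] at h1
    rw [h1, Finset.sum_mul]
    apply Finset.sum_congr rfl
    intro k hk
    have hkn : k ≤ n := by simp at hk; omega
    rw [qBinom_eq hq1 hkn]
    field_simp [hF]
  · -- second identity
    have h1 : PowerSeries.coeff n (qGen q (G x y)) =
        ∑ k ∈ Finset.range (n + 1), (G x 0 k / qFact q k) *
          (qShift (-1) q (n - k) * y ^ (n - k) / (2 ^ (n - k) * qFact q (n - k))) := by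
      rw [keyy, coeff_gen_mul]
      exact Finset.sum_congr rfl fun k _ => by simp [qExp, coeff_mk]
    simp only [qGen, coeff_mk] at h1
    rw [div_eq_iff (hF n)] at h1
    rw [h1, Finset.sum_mul]
    apply Finset.sum_congr rfl
    intro k hk
    have hkn : k ≤ n := by simp at hk; omega
    rw [qBinom_eq hq1 hkn]
    field_simp [hF]
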